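/- ∑_{n=1}^∞ h_{n-1}^{(2)}/(n-1/2)³ = 9·ζ(2)·ζ(3) - (31/2)·ζ(5), where h_n^{(2)} = ∑_{k=1}^n 1/(k-1/2)² and h_0^{(2)} = 0. -/

import Mathlib

open scoped BigOperators

/-- ζ(p) = ∑_{n=1}^∞ 1/n^p -/
noncomputable def zetaR (p : ℕ) : ℝ := ∑' n : ℕ, 1 / ((n : ℝ) + 1) ^ p

/-- Odd harmonic number h_n^{(p)} = ∑_{k=1}^n 1/(k−1/2)^p -/
noncomputable def oddH (p n : ℕ) : ℝ := ∑ k ∈ Finset.range n, 1 / ((k : ℝ) + 1 / 2) ^ p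

/-- Alternating odd harmonic number h̄_n^{(p)} = ∑_{k=1}^n (−1)^{k−1}/(k−1/2)^p -/
noncomputable def altOddH (p n : ℕ) : ℝ :=
  ∑ k ∈ Finset.range n, (-1 : ℝ) ^ k / ((k : ℝ) + 1 / 2) ^ p

/-- Dirichlet beta β(s) = ∑_{n=0}^∞ (−1)^n/(2n+1)^s -/
noncomputable def betaD (s : ℕ) : ℝ := ∑' n : ℕ, (-1 : ℝ) ^ n / (2 * (n : ℝ) + 1) ^ s

namespace OddAux

open Filter Finset

open Filter Finset

noncomputable def aa (p m : ℕ) : ℝ := 1 / ((m : ℝ) + 1 / 2) ^ p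
noncomputable def bb (p n : ℕ) : ℝ := 1 / ((n : ℝ) + 1) ^ p
noncomputable def lam (p : ℕ) : ℝ := ∑' m, aa p m
noncomputable def mu (q p : ℕ) : ℝ := ∑' k, oddH p (k + 1) * bb q k

lemma xpos (m : ℕ) : (0:ℝ) < (m : ℝ) + 1 / 2 := by positivity

lemma aa_nonneg (p m : ℕ) : 0 ≤ aa p m := by unfold aa; positivity

lemma bb_nonneg (p n : ℕ) : 0 ≤ bb p n := by unfold bb; positivity

lemma aa_shift (p m d : ℕ) : aa p (m + d) = 1 / (((m : ℝ) + 1 / 2) + (d : ℝ)) ^ p := by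
  unfold aa; push_cast; ring_nf

lemma summable_bb {p : ℕ} (hp : 2 ≤ p) : Summable (bb p) := by
  have h : Summable (fun n : ℕ => 1 / (n : ℝ) ^ p) :=
    Real.summable_one_div_nat_pow.2 (by omega)
  have := (summable_nat_add_iff (f := fun n : ℕ => 1 / (n : ℝ) ^ p) 1).2 h
  refine this.congr fun n => ?_
  unfold bb; push_cast; ring_nf

lemma summable_aa {p : ℕ} (hp : 2 ≤ p) : Summable (aa p) := by
  refine Summable.of_nonneg_of_le (aa_nonneg p) (fun m => ?_) ((summable_bb hp).mul_left (2 ^ p))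
  unfold aa bb
  have h1 : ((m : ℝ) + 1) / 2 ≤ (m : ℝ) + 1 / 2 := by linarith [Nat.cast_nonneg (α := ℝ) m]
  have h2 : (((m : ℝ) + 1) / 2) ^ p ≤ ((m : ℝ) + 1 / 2) ^ p :=
    pow_le_pow_left₀ (by positivity) h1 p
  have h3 : (0:ℝ) < (((m : ℝ) + 1) / 2) ^ p := by positivity
  calc 1 / ((m : ℝ) + 1 / 2) ^ p ≤ 1 / (((m : ℝ) + 1) / 2) ^ p :=
        one_div_le_one_div_of_le h3 h2
    _ = 2 ^ p * (1 / ((m : ℝ) + 1) ^ p) := by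
        rw [div_pow]; field_simp
  
lemma zetaR_eq (p : ℕ) : zetaR p = ∑' n, bb p n := rfl

lemma oddH_eq (p n : ℕ) : oddH p n = ∑ k ∈ Finset.range n, aa p k := rfl

lemma oddH_nonneg (p n : ℕ) : 0 ≤ oddH p n := by
  rw [oddH_eq]; exact Finset.sum_nonneg fun k _ => aa_nonneg p k

lemma oddH_le_lam {p : ℕ} (hp : 2 ≤ p) (n : ℕ) : oddH p n ≤ lam p := by
  rw [oddH_eq]
  exact Summable.sum_le_tsum (Finset.range n) (fun k _ => aa_nonneg p k) (summable_aa hp)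

lemma oddH_one_le (n : ℕ) : oddH 1 n ≤ 2 * n := by
  rw [oddH_eq]
  calc ∑ k ∈ Finset.range n, aa 1 k ≤ ∑ _k ∈ Finset.range n, (2:ℝ) := by
        refine Finset.sum_le_sum fun k _ => ?_
        unfold aa
        rw [pow_one, div_le_iff₀ (xpos k)]
        have := Nat.cast_nonneg (α := ℝ) k
        linarith
    _ = 2 * n := by simp [mul_comm]

lemma lam_eq {p : ℕ} (hp : 2 ≤ p) : lam p = (2 ^ p - 1) * zetaR p := by
  have hb := summable_bb hp
  have heven : ∀ m : ℕ, bb p (2 * m) = aa p m / 2 ^ p := by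
    intro m
    unfold aa bb
    rw [div_div]
    congr 1
    push_cast
    rw [← mul_pow]
    ring_nf
  have hodd : ∀ m : ℕ, bb p (2 * m + 1) = bb p m / 2 ^ p := by
    intro m
    unfold bb
    rw [div_div]
    congr 1
    push_cast
    rw [show (2:ℝ) * m + 1 + 1 = 2 * (m + 1) by ring, mul_pow]
    ring
  have hse : Summable fun m => bb p (2 * m) := by
    refine ((summable_aa hp).div_const (2 ^ p)).congr fun m => (heven m).symm
  have hso : Summable fun m => bb p (2 * m + 1) := by
    refine (hb.div_const (2 ^ p)).congr fun m => (hodd m).symm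
  have hsplit := tsum_even_add_odd hse hso
  have he : ∑' m, bb p (2 * m) = lam p / 2 ^ p := by
    rw [show (fun m => bb p (2 * m)) = fun m => aa p m / 2 ^ p from funext heven,
      tsum_div_const]
    rfl
  have ho : ∑' m, bb p (2 * m + 1) = zetaR p / 2 ^ p := by
    rw [show (fun m => bb p (2 * m + 1)) = fun m => bb p m / 2 ^ p from funext hodd,
      tsum_div_const]
    rfl
  rw [he, ho, ← zetaR_eq] at hsplit
  have h2p : (0:ℝ) < 2 ^ p := by positivity
  field_simp at hsplit ⊢
  linarith

lemma summable_aa_shift {p : ℕ} (hp : 2 ≤ p) (d : ℕ) : Summable fun m => aa p (m + d) :=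
  (summable_nat_add_iff d).2 (summable_aa hp)

lemma tail {p : ℕ} (hp : 2 ≤ p) (d : ℕ) : ∑' m, aa p (m + d) = lam p - oddH p d := by
  have := Summable.sum_add_tsum_nat_add (f := aa p) d (summable_aa hp)
  rw [← oddH_eq] at this
  unfold lam
  linarith

lemma tele_nonneg (d m : ℕ) : 0 ≤ aa 1 m - aa 1 (m + d) := by
  unfold aa
  rw [sub_nonneg, pow_one, pow_one]
  apply one_div_le_one_div_of_le (xpos m)
  push_cast
  linarith [Nat.cast_nonneg (α := ℝ) d]

lemma tele_le (d m : ℕ) : aa 1 m - aa 1 (m + d) ≤ (d : ℝ) * aa 2 m := by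
  rw [aa_shift]
  unfold aa
  set x : ℝ := (m : ℝ) + 1 / 2 with hx
  have hx0 : 0 < x := xpos m
  have hd0 : (0:ℝ) ≤ d := Nat.cast_nonneg d
  have h1 : 1 / x ^ 1 - 1 / (x + d) ^ 1 = (d : ℝ) / (x * (x + d)) := by
    field_simp
    ring
  rw [h1]
  have h2 : (d : ℝ) / (x * (x + d)) ≤ (d : ℝ) / (x * x) := by
    apply div_le_div_of_nonneg_left hd0 (by positivity)
    nlinarith
  calc (d : ℝ) / (x * (x + d)) ≤ (d : ℝ) / (x * x) := h2
    _ = (d : ℝ) * (1 / x ^ 2) := by rw [pow_two, mul_one_div]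

lemma summable_tele (d : ℕ) : Summable fun m => aa 1 m - aa 1 (m + d) :=
  Summable.of_nonneg_of_le (tele_nonneg d) (tele_le d) ((summable_aa le_rfl).mul_left _)

lemma tele (d : ℕ) : ∑' m, (aa 1 m - aa 1 (m + d)) = oddH 1 d := by
  refine ((Summable.hasSum_iff_tendsto_nat (summable_tele d)).2 ?_).tsum_eq
  have hps : ∀ M : ℕ, ∑ m ∈ Finset.range M, (aa 1 m - aa 1 (m + d)) =
      oddH 1 d - ∑ i ∈ Finset.range d, aa 1 (M + i) := by
    intro M
    rw [Finset.sum_sub_distrib]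
    have h1 : ∑ m ∈ Finset.range M, aa 1 (m + d) =
        oddH 1 (d + M) - oddH 1 d := by
      rw [oddH_eq, oddH_eq, Finset.sum_range_add]
      have : ∀ x ∈ Finset.range M, aa 1 (d + x) = aa 1 (x + d) := by
        intro x _; rw [Nat.add_comm]
      rw [Finset.sum_congr rfl this]
      ring
    have h2 : oddH 1 (d + M) = oddH 1 M + ∑ i ∈ Finset.range d, aa 1 (M + i) := by
      rw [Nat.add_comm d M, oddH_eq, oddH_eq, Finset.sum_range_add]
    rw [h1, h2, ← oddH_eq]
    ring
  rw [show (fun M => ∑ m ∈ Finset.range M, (aa 1 m - aa 1 (m + d))) =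
      (fun M => oddH 1 d - ∑ i ∈ Finset.range d, aa 1 (M + i)) from funext hps]
  have hz : Tendsto (fun M : ℕ => ∑ i ∈ Finset.range d, aa 1 (M + i)) atTop (nhds 0) := by
    apply squeeze_zero (fun M => Finset.sum_nonneg fun i _ => aa_nonneg 1 _)
      (g := fun M : ℕ => (d : ℝ) * (2 * (1 / ((M : ℝ) + 1))))
    · intro M
      calc ∑ i ∈ Finset.range d, aa 1 (M + i) ≤ ∑ _i ∈ Finset.range d, 2 * (1 / ((M : ℝ) + 1)) := by
            refine Finset.sum_le_sum fun i _ => ?_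
            unfold aa
            rw [pow_one]
            rw [div_le_iff₀ (xpos _)]
            have h1 : (1:ℝ) / ((M : ℝ) + 1) > 0 := by positivity
            have h2 : ((M : ℝ) + 1) ≤ 2 * (((M : ℝ) + (i : ℝ)) + 1 / 2) := by
              have := Nat.cast_nonneg (α := ℝ) i
              have := Nat.cast_nonneg (α := ℝ) M
              linarith
            have h3 : ((M + i : ℕ) : ℝ) + 1 / 2 = ((M : ℝ) + (i : ℝ)) + 1 / 2 := by push_cast; ring
            rw [h3]
            have h4 : 2 * (1 / ((M : ℝ) + 1)) * (((M : ℝ) + (i : ℝ)) + 1 / 2) =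
                (2 * (((M : ℝ) + (i : ℝ)) + 1 / 2)) / ((M : ℝ) + 1) := by ring
            rw [h4, le_div_iff₀ (by positivity)]
            linarith
        _ = (d : ℝ) * (2 * (1 / ((M : ℝ) + 1))) := by
            rw [Finset.sum_const, Finset.card_range, nsmul_eq_mul]
    · have := tendsto_one_div_add_atTop_nhds_zero_nat (𝕜 := ℝ)
      have h2 := this.const_mul (2 : ℝ)
      have h3 := h2.const_mul (d : ℝ)
      simpa using h3
  have := (tendsto_const_nhds (x := oddH 1 d) (f := atTop (α := ℕ))).sub hz
  simpa using this



noncomputable def tau32 : ℝ := ∑' n, oddH 2 n * aa 3 n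
noncomputable def tau23 : ℝ := ∑' n, oddH 3 n * aa 2 n

noncomputable def gg (p : ℕ × ℕ) : ℝ := aa 2 p.1 * aa 3 p.2
noncomputable def g1 (p : ℕ × ℕ) : ℝ := if p.1 < p.2 then gg p else 0
noncomputable def g2 (p : ℕ × ℕ) : ℝ := if p.1 = p.2 then gg p else 0
noncomputable def g3 (p : ℕ × ℕ) : ℝ := if p.2 < p.1 then gg p else 0

lemma gg_nonneg (p : ℕ × ℕ) : 0 ≤ gg p := mul_nonneg (aa_nonneg _ _) (aa_nonneg _ _)

lemma summable_gg : Summable gg :=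
  Summable.mul_of_nonneg (summable_aa le_rfl) (summable_aa (by norm_num))
    (fun m => aa_nonneg 2 m) (fun m => aa_nonneg 3 m)

lemma summable_g1 : Summable g1 := by
  refine Summable.of_nonneg_of_le (fun p => ?_) (fun p => ?_) summable_gg
  · unfold g1; split
    · exact gg_nonneg p
    · exact le_refl 0
  · unfold g1; split
    · exact le_refl _
    · exact gg_nonneg p

lemma summable_g2 : Summable g2 := by
  refine Summable.of_nonneg_of_le (fun p => ?_) (fun p => ?_) summable_gg
  · unfold g2; split
    · exact gg_nonneg p
    · exact le_refl 0
  · unfold g2; split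
    · exact le_refl _
    · exact gg_nonneg p

lemma summable_g3 : Summable g3 := by
  refine Summable.of_nonneg_of_le (fun p => ?_) (fun p => ?_) summable_gg
  · unfold g3; split
    · exact gg_nonneg p
    · exact le_refl 0
  · unfold g3; split
    · exact le_refl _
    · exact gg_nonneg p

lemma tsum_gg : ∑' p, gg p = lam 2 * lam 3 := by
  rw [Summable.tsum_prod' summable_gg (fun b => (summable_aa (p := 3) (by norm_num)).mul_left (aa 2 b))]
  calc ∑' m, ∑' M, gg (m, M) = ∑' m, aa 2 m * lam 3 := by
        refine tsum_congr fun m => ?_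
        show ∑' M, aa 2 m * aa 3 M = aa 2 m * lam 3
        rw [tsum_mul_left]
        rfl
    _ = lam 2 * lam 3 := by
        rw [show (lam 2 : ℝ) = ∑' m, aa 2 m from rfl, ← tsum_mul_right]

lemma tsum_g1 : ∑' p, g1 p = tau32 := by
  have h := (Equiv.prodComm ℕ ℕ).tsum_eq g1
  rw [← h]
  have hsw : Summable fun c : ℕ × ℕ => g1 ((Equiv.prodComm ℕ ℕ) c) := by
    exact summable_g1.prod_symm
  rw [Summable.tsum_prod' hsw (fun M => summable_of_ne_finset_zero (s := Finset.range M)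
    (fun m hm => by
      simp only [Equiv.prodComm_apply, Prod.swap_prod_mk, g1]
      exact if_neg (by simpa using hm)))]
  unfold tau32
  refine tsum_congr fun M => ?_
  have : ∑' m, g1 ((Equiv.prodComm ℕ ℕ) (M, m)) = ∑ m ∈ Finset.range M, g1 (m, M) := by
    refine tsum_eq_sum fun m hm => ?_
    simp only [Equiv.prodComm_apply, Prod.swap_prod_mk, g1]
    exact if_neg (by simpa using hm)
  rw [this]
  have : ∑ m ∈ Finset.range M, g1 (m, M) = ∑ m ∈ Finset.range M, aa 2 m * aa 3 M := by
    refine Finset.sum_congr rfl fun m hm => ?_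
    simp only [g1, gg]
    rw [if_pos (by simpa using hm)]
  rw [this, ← Finset.sum_mul, ← oddH_eq]

lemma tsum_g3 : ∑' p, g3 p = tau23 := by
  rw [Summable.tsum_prod' summable_g3 (fun m => summable_of_ne_finset_zero (s := Finset.range m)
    (fun M hM => by
      simp only [g3]
      rw [if_neg]; simpa using hM))]
  unfold tau23
  refine tsum_congr fun m => ?_
  have : ∑' M, g3 (m, M) = ∑ M ∈ Finset.range m, g3 (m, M) := by
    refine tsum_eq_sum fun M hM => ?_
    simp only [g3]
    rw [if_neg]; simpa using hM
  rw [this]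
  have : ∑ M ∈ Finset.range m, g3 (m, M) = ∑ M ∈ Finset.range m, aa 3 M * aa 2 m := by
    refine Finset.sum_congr rfl fun M hM => ?_
    simp only [g3, gg]
    rw [if_pos (by simpa using hM)]
    ring
  rw [this, ← Finset.sum_mul, ← oddH_eq]

lemma aa_mul_aa (m : ℕ) : aa 2 m * aa 3 m = aa 5 m := by
  unfold aa
  rw [div_mul_div_comm, one_mul, ← pow_add]

lemma tsum_g2 : ∑' p, g2 p = lam 5 := by
  rw [Summable.tsum_prod' summable_g2 (fun m => summable_of_ne_finset_zero (s := {m})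
    (fun M hM => by
      simp only [g2]
      rw [if_neg]; simpa using (Ne.symm (by simpa using hM))))]
  unfold lam
  refine tsum_congr fun m => ?_
  have : ∑' M, g2 (m, M) = ∑ M ∈ ({m} : Finset ℕ), g2 (m, M) := by
    refine tsum_eq_sum fun M hM => ?_
    simp only [g2]
    rw [if_neg (Ne.symm (by simpa using hM))]
  rw [this, Finset.sum_singleton]
  simp only [g2, gg, if_pos rfl]
  exact aa_mul_aa m

lemma split_g (p : ℕ × ℕ) : gg p = g1 p + g2 p + g3 p := by
  unfold g1 g2 g3
  rcases lt_trichotomy p.1 p.2 with h | h | h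
  · rw [if_pos h, if_neg (by omega), if_neg (by omega)]; ring
  · rw [if_neg (by omega), if_pos h, if_neg (by omega)]; ring
  · rw [if_neg (by omega), if_neg (by omega), if_pos h]; ring

lemma E1 : lam 2 * lam 3 = tau32 + lam 5 + tau23 := by
  rw [← tsum_gg, ← tsum_g1, ← tsum_g2, ← tsum_g3]
  rw [tsum_congr split_g, Summable.tsum_add (summable_g1.add summable_g2) summable_g3,
    Summable.tsum_add summable_g1 summable_g2]

/-! ### E2 : partial fractions for tau32 -/

lemma aa3_le (j : ℕ) : aa 3 j ≤ 8 := by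
  unfold aa
  rw [div_le_iff₀ (by positivity)]
  have h : ((1:ℝ)/2) ^ 3 ≤ ((j:ℝ) + 1/2) ^ 3 := by
    apply pow_le_pow_left₀ (by norm_num)
    have := Nat.cast_nonneg (α := ℝ) j
    linarith
  nlinarith

noncomputable def h2f (q : ℕ × ℕ) : ℝ := aa 2 q.2 * aa 3 (q.2 + q.1 + 1)

def i2 (q : ℕ × ℕ) : ℕ × ℕ := (q.2, q.2 + q.1 + 1)

lemma i2_inj : Function.Injective i2 := by
  intro a b h
  unfold i2 at h
  have h1 := congrArg Prod.fst h
  have h2 := congrArg Prod.snd h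
  simp only at h1 h2
  exact Prod.ext (by omega) (by omega)

lemma g1_supp : Function.support g1 ⊆ Set.range i2 := by
  intro p hp
  have : p.1 < p.2 := by
    by_contra hc
    exact hp (by unfold g1; rw [if_neg hc])
  exact ⟨(p.2 - p.1 - 1, p.1), by unfold i2; exact Prod.ext (by simp) (by simp; omega)⟩

lemma g1_comp (q : ℕ × ℕ) : g1 (i2 q) = h2f q := by
  unfold g1 i2 h2f gg
  rw [if_pos (by simp)]

lemma tsum_h2 : ∑' q, h2f q = tau32 := by
  rw [← tsum_g1, ← i2_inj.tsum_eq g1_supp]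
  exact (tsum_congr g1_comp).symm

lemma summable_h2 : Summable h2f :=
  ((i2_inj.summable_iff (fun x hx => Function.notMem_support.1
    (fun hs => hx (g1_supp hs)))).2 summable_g1).congr g1_comp

lemma cast_succ (k : ℕ) : (((k+1:ℕ)) : ℝ) = (k : ℝ) + 1 := by push_cast; ring

lemma kernel2 (k m : ℕ) : aa 2 m * aa 3 (m + (k+1)) =
    bb 3 k * aa 2 m - 3 * bb 4 k * (aa 1 m - aa 1 (m + (k+1)))
    + 2 * (bb 3 k * aa 2 (m + (k+1))) + bb 2 k * aa 3 (m + (k+1)) := by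
  simp only [aa_shift, cast_succ]
  unfold aa bb
  have hx : ((m:ℝ) + 1/2) ≠ 0 := ne_of_gt (xpos m)
  have hk : ((k:ℝ) + 1) ≠ 0 := by positivity
  have hxk : ((m:ℝ) + 1/2) + ((k:ℝ) + 1) ≠ 0 := by positivity
  field_simp
  ring

lemma summable_h2_row (k : ℕ) : Summable fun m => aa 2 m * aa 3 (m + k + 1) := by
  refine Summable.of_nonneg_of_le (fun m => mul_nonneg (aa_nonneg _ _) (aa_nonneg _ _))
    (fun m => ?_) ((summable_aa (p := 2) le_rfl).mul_left 8)
  calc aa 2 m * aa 3 (m + k + 1) ≤ aa 2 m * 8 :=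
        mul_le_mul_of_nonneg_left (aa3_le _) (aa_nonneg _ _)
    _ = 8 * aa 2 m := by ring

lemma inner2 (k : ℕ) : ∑' m, h2f (k, m) =
    lam 2 * bb 3 k - 3 * (oddH 1 (k+1) * bb 4 k)
    + (2 * (lam 2 * bb 3 k) - 2 * (oddH 2 (k+1) * bb 3 k))
    + (lam 3 * bb 2 k - oddH 3 (k+1) * bb 2 k) := by
  have hpt : ∀ m, h2f (k, m) = bb 3 k * aa 2 m - 3 * bb 4 k * (aa 1 m - aa 1 (m + (k+1)))
      + 2 * (bb 3 k * aa 2 (m + (k+1))) + bb 2 k * aa 3 (m + (k+1)) := by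
    intro m
    have : h2f (k, m) = aa 2 m * aa 3 (m + (k+1)) := rfl
    rw [this, kernel2]
  rw [tsum_congr hpt]
  have s1 : Summable fun m => bb 3 k * aa 2 m := (summable_aa le_rfl).mul_left _
  have s2 : Summable fun m => 3 * bb 4 k * (aa 1 m - aa 1 (m + (k+1))) :=
    (summable_tele _).mul_left _
  have s3 : Summable fun m => 2 * (bb 3 k * aa 2 (m + (k+1))) :=
    ((summable_aa_shift le_rfl _).mul_left _).mul_left _
  have s4 : Summable fun m => bb 2 k * aa 3 (m + (k+1)) :=
    (summable_aa_shift (by norm_num) _).mul_left _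
  rw [Summable.tsum_add ((s1.sub s2).add s3) s4, Summable.tsum_add (s1.sub s2) s3, Summable.tsum_sub s1 s2]
  have h1 : ∑' m, bb 3 k * aa 2 m = bb 3 k * lam 2 := by rw [tsum_mul_left]; rfl
  have h2 : ∑' m, 3 * bb 4 k * (aa 1 m - aa 1 (m + (k+1))) = 3 * bb 4 k * oddH 1 (k+1) := by
    rw [tsum_mul_left, tele]
  have h3 : ∑' m, 2 * (bb 3 k * aa 2 (m + (k+1))) = 2 * (bb 3 k * (lam 2 - oddH 2 (k+1))) := by
    rw [tsum_mul_left, tsum_mul_left, tail le_rfl]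
  have h4 : ∑' m, bb 2 k * aa 3 (m + (k+1)) = bb 2 k * (lam 3 - oddH 3 (k+1)) := by
    rw [tsum_mul_left, tail (by norm_num)]
  rw [h1, h2, h3, h4]
  ring

lemma summable_m41 : Summable fun k => oddH 1 (k+1) * bb 4 k := by
  refine Summable.of_nonneg_of_le
    (fun k => mul_nonneg (oddH_nonneg _ _) (bb_nonneg _ _)) (fun k => ?_)
    ((summable_bb (p := 3) (by norm_num)).mul_left 2)
  have h1 : oddH 1 (k+1) ≤ 2 * ((k:ℝ) + 1) := by
    have := oddH_one_le (k+1)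
    rwa [cast_succ] at this
  calc oddH 1 (k+1) * bb 4 k ≤ (2 * ((k:ℝ)+1)) * bb 4 k :=
        mul_le_mul_of_nonneg_right h1 (bb_nonneg _ _)
    _ = 2 * bb 3 k := by
        unfold bb
        rw [show ((k:ℝ)+1)^4 = ((k:ℝ)+1)^3 * ((k:ℝ)+1) by ring]
        have : ((k:ℝ)+1) ≠ 0 := by positivity
        field_simp

lemma summable_oddH_bb {q p : ℕ} (hp : 2 ≤ p) (hq : 2 ≤ q) :
    Summable fun k => oddH p (k+1) * bb q k := by
  refine Summable.of_nonneg_of_le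
    (fun k => mul_nonneg (oddH_nonneg _ _) (bb_nonneg _ _)) (fun k => ?_)
    ((summable_bb hq).mul_left (lam p))
  exact mul_le_mul_of_nonneg_right (oddH_le_lam hp _) (bb_nonneg _ _)

lemma E2 : tau32 = lam 2 * zetaR 3 - 3 * mu 4 1
    + (2 * (lam 2 * zetaR 3) - 2 * mu 3 2) + (lam 3 * zetaR 2 - mu 2 3) := by
  rw [← tsum_h2, Summable.tsum_prod' summable_h2 (fun k => summable_h2_row k), tsum_congr inner2]
  have t1 : Summable fun k => lam 2 * bb 3 k := (summable_bb (by norm_num)).mul_left _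
  have t2 : Summable fun k => 3 * (oddH 1 (k+1) * bb 4 k) := summable_m41.mul_left _
  have t3 : Summable fun k => 2 * (lam 2 * bb 3 k) := t1.mul_left _
  have t4 : Summable fun k => 2 * (oddH 2 (k+1) * bb 3 k) :=
    (summable_oddH_bb le_rfl (by norm_num)).mul_left _
  have t5 : Summable fun k => lam 3 * bb 2 k := (summable_bb le_rfl).mul_left _
  have t6 : Summable fun k => oddH 3 (k+1) * bb 2 k := summable_oddH_bb (by norm_num) le_rfl
  rw [Summable.tsum_add ((t1.sub t2).add (t3.sub t4)) (t5.sub t6),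
    Summable.tsum_add (t1.sub t2) (t3.sub t4), Summable.tsum_sub t1 t2, Summable.tsum_sub t3 t4, Summable.tsum_sub t5 t6]
  have h1 : ∑' k, lam 2 * bb 3 k = lam 2 * zetaR 3 := by rw [tsum_mul_left, ← zetaR_eq]
  have h2 : ∑' k, 3 * (oddH 1 (k+1) * bb 4 k) = 3 * mu 4 1 := by rw [tsum_mul_left]; rfl
  have h3 : ∑' k, 2 * (lam 2 * bb 3 k) = 2 * (lam 2 * zetaR 3) := by
    rw [tsum_mul_left, tsum_mul_left, ← zetaR_eq]
  have h4 : ∑' k, 2 * (oddH 2 (k+1) * bb 3 k) = 2 * mu 3 2 := by rw [tsum_mul_left]; rfl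
  have h5 : ∑' k, lam 3 * bb 2 k = lam 3 * zetaR 2 := by rw [tsum_mul_left, ← zetaR_eq]
  have h6 : ∑' k, oddH 3 (k+1) * bb 2 k = mu 2 3 := rfl
  rw [h1, h2, h3, h4, h5, h6]

/-! ### E3 : partial fractions for tau23 -/

noncomputable def h3f (q : ℕ × ℕ) : ℝ := aa 2 (q.2 + q.1 + 1) * aa 3 q.2

def i3 (q : ℕ × ℕ) : ℕ × ℕ := (q.2 + q.1 + 1, q.2)

lemma i3_inj : Function.Injective i3 := by
  intro a b h
  unfold i3 at h
  have h1 := congrArg Prod.fst h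
  have h2 := congrArg Prod.snd h
  simp only at h1 h2
  exact Prod.ext (by omega) (by omega)

lemma g3_supp : Function.support g3 ⊆ Set.range i3 := by
  intro p hp
  have : p.2 < p.1 := by
    by_contra hc
    exact hp (by unfold g3; rw [if_neg hc])
  exact ⟨(p.1 - p.2 - 1, p.2), by unfold i3; exact Prod.ext (by simp; omega) (by simp)⟩

lemma g3_comp (q : ℕ × ℕ) : g3 (i3 q) = h3f q := by
  unfold g3 i3 h3f gg
  rw [if_pos (by simp)]

lemma tsum_h3 : ∑' q, h3f q = tau23 := by
  rw [← tsum_g3, ← i3_inj.tsum_eq g3_supp]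
  exact (tsum_congr g3_comp).symm

lemma summable_h3 : Summable h3f :=
  ((i3_inj.summable_iff (fun x hx => Function.notMem_support.1
    (fun hs => hx (g3_supp hs)))).2 summable_g3).congr g3_comp

lemma kernel3 (k m : ℕ) : aa 2 (m + (k+1)) * aa 3 m =
    bb 2 k * aa 3 m - 2 * (bb 3 k * aa 2 m)
    + 3 * (bb 4 k * (aa 1 m - aa 1 (m + (k+1)))) - bb 3 k * aa 2 (m + (k+1)) := by
  simp only [aa_shift, cast_succ]
  unfold aa bb
  have hx : ((m:ℝ) + 1/2) ≠ 0 := ne_of_gt (xpos m)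
  have hk : ((k:ℝ) + 1) ≠ 0 := by positivity
  have hxk : ((m:ℝ) + 1/2) + ((k:ℝ) + 1) ≠ 0 := by positivity
  field_simp
  ring

lemma summable_h3_row (k : ℕ) : Summable fun m => aa 2 (m + k + 1) * aa 3 m := by
  refine Summable.of_nonneg_of_le (fun m => mul_nonneg (aa_nonneg _ _) (aa_nonneg _ _))
    (fun m => ?_) ((summable_aa (p := 3) (by norm_num)).mul_left 4)
  have h2 : aa 2 (m + k + 1) ≤ 4 := by
    unfold aa
    rw [div_le_iff₀ (by positivity)]
    have h : ((1:ℝ)/2) ^ 2 ≤ ((( m + k + 1 :ℕ):ℝ) + 1/2) ^ 2 := by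
      apply pow_le_pow_left₀ (by norm_num)
      have := Nat.cast_nonneg (α := ℝ) (m + k + 1)
      linarith
    nlinarith
  calc aa 2 (m + k + 1) * aa 3 m ≤ 4 * aa 3 m :=
        mul_le_mul_of_nonneg_right h2 (aa_nonneg _ _)
    _ = 4 * aa 3 m := rfl

lemma inner3 (k : ℕ) : ∑' m, h3f (k, m) =
    lam 3 * bb 2 k - 2 * (lam 2 * bb 3 k)
    + 3 * (oddH 1 (k+1) * bb 4 k) - (lam 2 * bb 3 k - oddH 2 (k+1) * bb 3 k) := by
  have hpt : ∀ m, h3f (k, m) = bb 2 k * aa 3 m - 2 * (bb 3 k * aa 2 m)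
      + 3 * (bb 4 k * (aa 1 m - aa 1 (m + (k+1)))) - bb 3 k * aa 2 (m + (k+1)) := by
    intro m
    have : h3f (k, m) = aa 2 (m + (k+1)) * aa 3 m := rfl
    rw [this, kernel3]
  rw [tsum_congr hpt]
  have s1 : Summable fun m => bb 2 k * aa 3 m := (summable_aa (by norm_num)).mul_left _
  have s2 : Summable fun m => 2 * (bb 3 k * aa 2 m) :=
    ((summable_aa le_rfl).mul_left _).mul_left _
  have s3 : Summable fun m => 3 * (bb 4 k * (aa 1 m - aa 1 (m + (k+1)))) :=
    ((summable_tele _).mul_left _).mul_left _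
  have s4 : Summable fun m => bb 3 k * aa 2 (m + (k+1)) :=
    (summable_aa_shift le_rfl _).mul_left _
  rw [Summable.tsum_sub ((s1.sub s2).add s3) s4, Summable.tsum_add (s1.sub s2) s3, Summable.tsum_sub s1 s2]
  have h1 : ∑' m, bb 2 k * aa 3 m = bb 2 k * lam 3 := by rw [tsum_mul_left]; rfl
  have h2 : ∑' m, 2 * (bb 3 k * aa 2 m) = 2 * (bb 3 k * lam 2) := by
    rw [tsum_mul_left, tsum_mul_left]; rfl
  have h3 : ∑' m, 3 * (bb 4 k * (aa 1 m - aa 1 (m + (k+1)))) = 3 * (bb 4 k * oddH 1 (k+1)) := by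
    rw [tsum_mul_left, tsum_mul_left, tele]
  have h4 : ∑' m, bb 3 k * aa 2 (m + (k+1)) = bb 3 k * (lam 2 - oddH 2 (k+1)) := by
    rw [tsum_mul_left, tail le_rfl]
  rw [h1, h2, h3, h4]
  ring

lemma E3 : tau23 = lam 3 * zetaR 2 - 2 * (lam 2 * zetaR 3)
    + 3 * mu 4 1 - (lam 2 * zetaR 3 - mu 3 2) := by
  rw [← tsum_h3, Summable.tsum_prod' summable_h3 (fun k => summable_h3_row k), tsum_congr inner3]
  have t1 : Summable fun k => lam 3 * bb 2 k := (summable_bb le_rfl).mul_left _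
  have t2 : Summable fun k => 2 * (lam 2 * bb 3 k) :=
    ((summable_bb (by norm_num)).mul_left _).mul_left _
  have t3 : Summable fun k => 3 * (oddH 1 (k+1) * bb 4 k) := summable_m41.mul_left _
  have t4 : Summable fun k => lam 2 * bb 3 k := (summable_bb (by norm_num)).mul_left _
  have t5 : Summable fun k => oddH 2 (k+1) * bb 3 k := summable_oddH_bb le_rfl (by norm_num)
  rw [Summable.tsum_sub ((t1.sub t2).add t3) (t4.sub t5), Summable.tsum_add (t1.sub t2) t3,
    Summable.tsum_sub t1 t2, Summable.tsum_sub t4 t5]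
  have h1 : ∑' k, lam 3 * bb 2 k = lam 3 * zetaR 2 := by rw [tsum_mul_left, ← zetaR_eq]
  have h2 : ∑' k, 2 * (lam 2 * bb 3 k) = 2 * (lam 2 * zetaR 3) := by
    rw [tsum_mul_left, tsum_mul_left, ← zetaR_eq]
  have h3 : ∑' k, 3 * (oddH 1 (k+1) * bb 4 k) = 3 * mu 4 1 := by rw [tsum_mul_left]; rfl
  have h4 : ∑' k, lam 2 * bb 3 k = lam 2 * zetaR 3 := by rw [tsum_mul_left, ← zetaR_eq]
  have h5 : ∑' k, oddH 2 (k+1) * bb 3 k = mu 3 2 := rfl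
  rw [h1, h2, h3, h4, h5]

/-! ### E4 : Euler decomposition over the antidiagonal -/

noncomputable def G4 (q : ℕ × ℕ) : ℝ := if q.2 ≤ q.1 then aa 2 q.2 * aa 3 (q.1 - q.2) else 0

def j4 (q : ℕ × ℕ) : ℕ × ℕ := (q.1 + q.2, q.1)

lemma j4_inj : Function.Injective j4 := by
  intro a b h
  unfold j4 at h
  have h1 := congrArg Prod.fst h
  have h2 := congrArg Prod.snd h
  simp only at h1 h2
  exact Prod.ext (by omega) (by omega)

lemma G4_supp : Function.support G4 ⊆ Set.range j4 := by
  intro p hp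
  have hle : p.2 ≤ p.1 := by
    by_contra hc
    exact hp (by unfold G4; rw [if_neg hc])
  exact ⟨(p.2, p.1 - p.2), by unfold j4; exact Prod.ext (by simp; omega) (by simp)⟩

lemma G4_comp (q : ℕ × ℕ) : G4 (j4 q) = gg q := by
  unfold G4 j4 gg
  rw [if_pos (by simp)]
  simp

lemma tsum_G4 : ∑' q, G4 q = lam 2 * lam 3 := by
  rw [← tsum_gg, ← j4_inj.tsum_eq G4_supp]
  exact tsum_congr G4_comp

lemma summable_G4 : Summable G4 :=
  (j4_inj.summable_iff (fun x hx => Function.notMem_support.1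
    (fun hs => hx (G4_supp hs)))).1 (summable_gg.congr (fun q => (G4_comp q).symm))

lemma refl_sum (p s : ℕ) : ∑ m ∈ Finset.range (s+1), aa p (s - m) = oddH p (s+1) := by
  rw [oddH_eq]
  calc ∑ m ∈ Finset.range (s+1), aa p (s - m)
      = ∑ m ∈ Finset.range (s+1), aa p (s + 1 - 1 - m) := by
        refine Finset.sum_congr rfl fun m hm => ?_
        have he : s + 1 - 1 - m = s - m := by omega
        rw [he]
    _ = ∑ m ∈ Finset.range (s+1), aa p m := Finset.sum_range_reflect (aa p) (s+1)

lemma kernel4 (s m : ℕ) (hm : m ≤ s) : aa 2 m * aa 3 (s - m) =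
    bb 3 s * aa 2 m + 3 * (bb 4 s * aa 1 m) + bb 2 s * aa 3 (s - m)
    + 2 * (bb 3 s * aa 2 (s - m)) + 3 * (bb 4 s * aa 1 (s - m)) := by
  have hc : ((s - m : ℕ) : ℝ) + 1/2 = ((s:ℝ) + 1) - ((m:ℝ) + 1/2) := by
    rw [Nat.cast_sub hm]; ring
  unfold aa bb
  rw [hc]
  have hmr : (m:ℝ) ≤ (s:ℝ) := by exact_mod_cast hm
  set x : ℝ := (m:ℝ) + 1/2 with hxdef
  set N : ℝ := (s:ℝ) + 1 with hNdef
  have hx : x ≠ 0 := ne_of_gt (xpos m)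
  have hN : N ≠ 0 := by rw [hNdef]; positivity
  have hyx : N - x ≠ 0 := by
    have h2 : 0 < N - x := by rw [hxdef, hNdef]; linarith
    exact ne_of_gt h2
  field_simp
  ring

lemma fin4 (s : ℕ) : ∑ m ∈ Finset.range (s+1), aa 2 m * aa 3 (s - m) =
    6 * (oddH 1 (s+1) * bb 4 s) + 3 * (oddH 2 (s+1) * bb 3 s) + oddH 3 (s+1) * bb 2 s := by
  have h1 : ∑ m ∈ Finset.range (s+1), aa 2 m * aa 3 (s - m) =
      ∑ m ∈ Finset.range (s+1), (bb 3 s * aa 2 m + 3 * (bb 4 s * aa 1 m)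
        + bb 2 s * aa 3 (s - m) + 2 * (bb 3 s * aa 2 (s - m)) + 3 * (bb 4 s * aa 1 (s - m))) := by
    refine Finset.sum_congr rfl fun m hm => kernel4 s m (by
      have := Finset.mem_range.1 hm; omega)
  rw [h1]
  simp only [Finset.sum_add_distrib, ← Finset.mul_sum]
  rw [refl_sum, refl_sum, refl_sum, ← oddH_eq, ← oddH_eq]
  ring

lemma E4 : lam 2 * lam 3 = 6 * mu 4 1 + 3 * mu 3 2 + mu 2 3 := by
  rw [← tsum_G4, Summable.tsum_prod' summable_G4 (fun s => summable_of_ne_finset_zero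
    (s := Finset.range (s+1)) (fun m hm => by
      unfold G4
      rw [if_neg]
      simp only [Finset.mem_range] at hm
      omega))]
  have hrow : ∀ s, ∑' m, G4 (s, m) =
      6 * (oddH 1 (s+1) * bb 4 s) + 3 * (oddH 2 (s+1) * bb 3 s) + oddH 3 (s+1) * bb 2 s := by
    intro s
    rw [tsum_eq_sum (s := Finset.range (s+1)) (fun m hm => by
      unfold G4
      rw [if_neg]
      simp only [Finset.mem_range] at hm
      omega)]
    rw [← fin4 s]
    refine Finset.sum_congr rfl fun m hm => ?_
    unfold G4
    rw [if_pos]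
    simp only [Finset.mem_range] at hm
    omega
  rw [tsum_congr hrow]
  have t1 : Summable fun s => 6 * (oddH 1 (s+1) * bb 4 s) := summable_m41.mul_left _
  have t2 : Summable fun s => 3 * (oddH 2 (s+1) * bb 3 s) :=
    (summable_oddH_bb le_rfl (by norm_num)).mul_left _
  have t3 : Summable fun s => oddH 3 (s+1) * bb 2 s := summable_oddH_bb (by norm_num) le_rfl
  rw [Summable.tsum_add (t1.add t2) t3, Summable.tsum_add t1 t2]
  have h1 : ∑' s, 6 * (oddH 1 (s+1) * bb 4 s) = 6 * mu 4 1 := by rw [tsum_mul_left]; rfl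
  have h2 : ∑' s, 3 * (oddH 2 (s+1) * bb 3 s) = 3 * mu 3 2 := by rw [tsum_mul_left]; rfl
  have h3 : ∑' s, oddH 3 (s+1) * bb 2 s = mu 2 3 := rfl
  rw [h1, h2, h3]

lemma key : tau32 = 3 * (lam 2 * zetaR 3) - lam 5 / 2 := by
  have e1 := E1
  have e2 := E2
  have e3 := E3
  have e4 := E4
  linarith


end OddAux

/-- ∑_{n=1}^∞ h_{n−1}^{(2)}/(n−1/2)³ = 9ζ(2)ζ(3) − (31/2)ζ(5) -/
theorem linear_T_sum_23 :
    (∑' n : ℕ, oddH 2 n / ((n : ℝ) + 1 / 2) ^ 3) =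
      9 * zetaR 2 * zetaR 3 - 31 / 2 * zetaR 5 := by
  have h0 : (∑' n : ℕ, oddH 2 n / ((n : ℝ) + 1 / 2) ^ 3) = OddAux.tau32 := by
    refine tsum_congr fun n => ?_
    show oddH 2 n / ((n : ℝ) + 1 / 2) ^ 3 = oddH 2 n * OddAux.aa 3 n
    unfold OddAux.aa
    rw [mul_one_div]
  have hl2 : OddAux.lam 2 = 3 * zetaR 2 := by
    rw [OddAux.lam_eq le_rfl]; norm_num
  have hl5 : OddAux.lam 5 = 31 * zetaR 5 := by
    rw [OddAux.lam_eq (by norm_num)]; norm_num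
  rw [h0, OddAux.key, hl2, hl5]
  ring
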